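/- Monotonicity of the likelihood for the fixed-point MLE iteration: let λ < 0, Ξ ⊂ ℝ^d convex open, Ψ : Ξ → (0,∞) differentiable and strictly concave, and y_1,…,y_n ∈ Ξ. Define κ_i(η) = Ψ(η) + ∇Ψ(η)·(y_i − η) (assumed positive on Ξ), weights w_i(η) = κ_i(η)^{-1}/Σ_j κ_j(η)^{-1}, and the update T(η) = Σ_i w_i(η) y_i. If η ∈ Ξ, T(η) ∈ Ξ, and T(η) ≠ η, then ∏_{i=1}^n κ_i(T(η)) < ∏_{i=1}^n κ_i(η); equivalently, the log-likelihood ℓ = (1/λ) Σ_i log κ_i strictly increases under T. -/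

import Mathlib

open RealInnerProductSpace

lemma tangent_line_gt {E : Type*} [NormedAddCommGroup E] [InnerProductSpace ℝ E] [CompleteSpace E]
    {s : Set E} {f : E → ℝ} (hconc : StrictConcaveOn ℝ s f) {x z : E}
    (hx : x ∈ s) (hz : z ∈ s) (hne : z ≠ x) (hd : DifferentiableAt ℝ f x) :
    f z < f x + ⟪gradient f x, z - x⟫ := by
  set L : ℝ → E := fun t => x + t • (z - x) with hL
  have hzx : z - x ≠ 0 := sub_ne_zero.2 hne
  have hLcomb : ∀ (ta tb a b : ℝ), ta + tb = 1 →
      L (ta * a + tb * b) = ta • L a + tb • L b := by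
    intro ta tb a b h
    simp only [hL]
    have h' : tb = 1 - ta := by linarith
    subst h'
    module
  have hφ : StrictConcaveOn ℝ (L ⁻¹' s) (f ∘ L) := by
    constructor
    · intro a ha b hb ta tb hta htb hab
      have := hconc.1 ha hb hta htb hab
      simpa only [Set.mem_preimage, smul_eq_mul, hLcomb ta tb a b hab] using this
    · intro a ha b hb hab ta tb hta htb habt
      have hLab : L a ≠ L b := by
        intro h
        apply hab
        have : (a - b) • (z - x) = 0 := by
          have := sub_eq_zero.2 h
          simp only [hL] at this
          rw [show x + a • (z-x) - (x + b • (z-x)) = (a - b) • (z - x) by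
            rw [sub_smul]; abel] at this
          exact this
        rcases smul_eq_zero.1 this with h' | h'
        · exact sub_eq_zero.1 h'
        · exact absurd h' hzx
      have := hconc.2 ha hb hLab hta htb habt
      simpa only [Function.comp, smul_eq_mul, hLcomb ta tb a b habt] using this
  have hL0 : L 0 = x := by simp [hL]
  have hL1 : L 1 = z := by simp [hL]
  have h0 : (0:ℝ) ∈ L ⁻¹' s := by simp [Set.mem_preimage, hL0, hx]
  have h1 : (1:ℝ) ∈ L ⁻¹' s := by simp [Set.mem_preimage, hL1, hz]
  have hder : HasDerivAt (f ∘ L) (fderiv ℝ f x (z - x)) 0 := by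
    have h1' : HasDerivAt L (z - x) 0 := by
      have := ((hasDerivAt_id (0:ℝ)).smul_const (z - x)).const_add x
      simp only [id_eq, one_smul] at this
      exact this
    have hfd : HasFDerivAt f (fderiv ℝ f x) (L 0) := hL0 ▸ hd.hasFDerivAt
    exact hfd.comp_hasDerivAt 0 h1'
  have hslope := hφ.slope_lt_of_hasDerivAt h0 h1 zero_lt_one hder
  have hgrad : ⟪gradient f x, z - x⟫ = fderiv ℝ f x (z - x) := by
    rw [gradient, ← InnerProductSpace.toDual_apply_apply, LinearIsometryEquiv.apply_symm_apply]
  have hsl : slope (f ∘ L) 0 1 = f z - f x := by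
    simp [slope, hL0, hL1]
  rw [hsl] at hslope
  linarith [hgrad ▸ hslope]

/-- Monotonicity of the likelihood along the fixed-point MLE iteration: with
`κ_i(η) = Ψ(η) + ∇Ψ(η)·(y_i − η)` positive on `Ξ`, weights
`w_i(η) = κ_i(η)⁻¹/Σ_j κ_j(η)⁻¹` and update `T(η) = Σ_i w_i(η) y_i`, if `T(η) ≠ η`
(with `η, T(η) ∈ Ξ`) then `∏_i κ_i(T(η)) < ∏_i κ_i(η)`; equivalently the log-likelihood
`ℓ = (1/λ) Σ_i log κ_i` strictly increases (`λ < 0`). -/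
theorem likelihood_monotone (d n : ℕ) (hn : 0 < n) (lam : ℝ) (hlam : lam < 0)
    (Ξ : Set (EuclideanSpace ℝ (Fin d))) (hconv : Convex ℝ Ξ) (hopen : IsOpen Ξ)
    (Ψ : EuclideanSpace ℝ (Fin d) → ℝ)
    (hdiff : DifferentiableOn ℝ Ψ Ξ)
    (hposΨ : ∀ η ∈ Ξ, 0 < Ψ η)
    (hconc : StrictConcaveOn ℝ Ξ Ψ)
    (y : Fin n → EuclideanSpace ℝ (Fin d)) (hy : ∀ i, y i ∈ Ξ)
    (κ : Fin n → EuclideanSpace ℝ (Fin d) → ℝ)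
    (hκ : κ = fun i η => Ψ η + ⟪gradient Ψ η, y i - η⟫)
    (hκpos : ∀ i, ∀ η ∈ Ξ, 0 < κ i η)
    (w : Fin n → EuclideanSpace ℝ (Fin d) → ℝ)
    (hw : w = fun i η => (κ i η)⁻¹ / ∑ j, (κ j η)⁻¹)
    (T : EuclideanSpace ℝ (Fin d) → EuclideanSpace ℝ (Fin d))
    (hT : T = fun η => ∑ i, w i η • y i)
    (η : EuclideanSpace ℝ (Fin d)) (hη : η ∈ Ξ) (hTη : T η ∈ Ξ) (hne : T η ≠ η) :
    (∏ i, κ i (T η) < ∏ i, κ i η) ∧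
      (1 / lam) * ∑ i, Real.log (κ i (T η)) > (1 / lam) * ∑ i, Real.log (κ i η) := by
  haveI : Nonempty (Fin n) := Fin.pos_iff_nonempty.1 hn
  set η' := T η with hη'
  have hκi : ∀ i ξ, κ i ξ = Ψ ξ + ⟪gradient Ψ ξ, y i - ξ⟫ := fun i ξ => by rw [hκ]
  have hwi : ∀ i ξ, w i ξ = (κ i ξ)⁻¹ / ∑ j, (κ j ξ)⁻¹ := fun i ξ => by rw [hw]
  have hTdef : η' = ∑ i, w i η • y i := by rw [hη', hT]
  have hκp : ∀ i, 0 < κ i η := fun i => hκpos i η hη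
  have hκp' : ∀ i, 0 < κ i η' := fun i => hκpos i η' hTη
  set S := ∑ j, (κ j η)⁻¹ with hS
  have hSpos : 0 < S := Finset.sum_pos (fun j _ => inv_pos.2 (hκp j)) Finset.univ_nonempty
  have hwsum : ∑ i, w i η = 1 := by
    simp only [hwi, div_eq_mul_inv, ← Finset.sum_mul, ← hS]
    exact mul_inv_cancel₀ hSpos.ne'
  have hdη : DifferentiableAt ℝ Ψ η := hdiff.differentiableAt (hopen.mem_nhds hη)
  have hconcΨ : Ψ η' < Ψ η + ⟪gradient Ψ η, η' - η⟫ := tangent_line_gt hconc hη hTη hne hdη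
  -- expansion of inner products against the convex combination
  have hcomb : ∀ ξ : EuclideanSpace ℝ (Fin d), ∀ g : EuclideanSpace ℝ (Fin d),
      ⟪g, η' - ξ⟫ = ∑ i, w i η * ⟪g, y i - ξ⟫ := by
    intro ξ g
    have h1 : η' - ξ = ∑ i, w i η • (y i - ξ) := by
      rw [hTdef]
      simp only [smul_sub]
      rw [Finset.sum_sub_distrib, ← Finset.sum_smul, hwsum, one_smul]
    rw [h1, inner_sum]
    exact Finset.sum_congr rfl fun i _ => real_inner_smul_right g _ _
  have hexpand : ∀ ξ : EuclideanSpace ℝ (Fin d),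
      ∑ i, w i η * κ i ξ = Ψ ξ + ⟪gradient Ψ ξ, η' - ξ⟫ := by
    intro ξ
    rw [hcomb ξ (gradient Ψ ξ)]
    simp only [hκi, mul_add]
    rw [Finset.sum_add_distrib, ← Finset.sum_mul, hwsum, one_mul]
  have hexp' : ∑ i, w i η * κ i η' = Ψ η' := by
    rw [hexpand η']; simp
  have hval : ∑ i, w i η * κ i η = (n : ℝ) / S := by
    have : ∀ i ∈ Finset.univ, w i η * κ i η = 1 / S := by
      intro i _
      rw [hwi, ← hS]
      field_simp
      exact div_self (hκp i).ne'
    rw [Finset.sum_congr rfl this, Finset.sum_const, Finset.card_univ, Fintype.card_fin,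
      nsmul_eq_mul, mul_one_div]
  have hΨlt : Ψ η' < (n : ℝ) / S := by
    rw [← hval, hexpand η]; exact hconcΨ
  have hkey : ∑ i, κ i η' / κ i η < (n : ℝ) := by
    have h1 : ∑ i, κ i η' / κ i η = S * ∑ i, w i η * κ i η' := by
      rw [Finset.mul_sum]
      refine Finset.sum_congr rfl fun i _ => ?_
      rw [hwi, ← hS]
      field_simp
    rw [h1, hexp']
    calc S * Ψ η' < S * ((n : ℝ) / S) := by
          exact mul_lt_mul_of_pos_left hΨlt hSpos
      _ = (n : ℝ) := by field_simp
  have hlog : ∑ i, Real.log (κ i η') < ∑ i, Real.log (κ i η) := by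
    have hle : ∀ i ∈ Finset.univ, Real.log (κ i η') - Real.log (κ i η)
        ≤ κ i η' / κ i η - 1 := by
      intro i _
      rw [← Real.log_div (hκp' i).ne' (hκp i).ne']
      exact Real.log_le_sub_one_of_pos (div_pos (hκp' i) (hκp i))
    have hsum := Finset.sum_le_sum hle
    rw [Finset.sum_sub_distrib, Finset.sum_sub_distrib, Finset.sum_const,
      Finset.card_univ, Fintype.card_fin, nsmul_eq_mul, mul_one] at hsum
    linarith
  constructor
  · have hpp : 0 < ∏ i, κ i η := Finset.prod_pos fun i _ => hκp i
    have hpp' : 0 < ∏ i, κ i η' := Finset.prod_pos fun i _ => hκp' i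
    have h1 : Real.log (∏ i, κ i η') < Real.log (∏ i, κ i η) := by
      rw [Real.log_prod (fun i _ => (hκp' i).ne'),
        Real.log_prod (fun i _ => (hκp i).ne')]
      exact hlog
    exact (Real.log_lt_log_iff hpp' hpp).1 h1
  · exact mul_lt_mul_of_neg_left hlog (one_div_neg.2 hlam)
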